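/- Friedland–Karlin type inequality for conditional expectations: let ω be a distribution on a finite set with a test p₁,…,pₙ (Σ_i p_i = 1) such that all v_i := ω ⊨ p_i are nonzero. Then for all r₁,…,rₙ ∈ (0,1] with Σ_i r_i = 1: Σ_i [ r_i·v_i / (Σ_j r_j·(ω|_{p_j} ⊨ p_i)) ] ≤ 1. -/

import Mathlib

/-- Friedland–Karlin type inequality for conditional expectations. -/
theorem friedland_karlin_inequality {X : Type*} [Fintype X] {n : ℕ}
    (ω : X → ℝ) (p : Fin n → X → ℝ)
    (hω0 : ∀ x, 0 ≤ ω x) (hωsum : ∑ x, ω x = 1)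
    (hp0 : ∀ i x, 0 ≤ p i x) (hp1 : ∀ i x, p i x ≤ 1)
    (htest : ∀ x, ∑ i, p i x = 1)
    (v : Fin n → ℝ) (hv : ∀ i, v i = ∑ x, ω x * p i x) (hv0 : ∀ i, v i ≠ 0)
    (r : Fin n → ℝ) (hr0 : ∀ i, 0 < r i) (hr1 : ∀ i, r i ≤ 1)
    (hrsum : ∑ i, r i = 1) :
    ∑ i, r i * v i / (∑ j, r j * ((∑ x, ω x * (p i x * p j x)) / v j)) ≤ 1 := by
  have hvpos : ∀ i, 0 < v i := by
    intro i
    have hnn : 0 ≤ v i := by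
      rw [hv i]; exact Finset.sum_nonneg fun x _ => mul_nonneg (hω0 x) (hp0 i x)
    exact lt_of_le_of_ne hnn (Ne.symm (hv0 i))
  set f : X → ℝ := fun x => ∑ j, r j * p j x / v j with hf_def
  have hfpos : ∀ x, 0 < f x := by
    intro x
    have h1 : ∑ j : Fin n, (0:ℝ) < ∑ j, p j x := by rw [htest x]; simp
    obtain ⟨j, -, hj⟩ := Finset.exists_lt_of_sum_lt h1
    apply Finset.sum_pos' (fun k _ => div_nonneg (mul_nonneg (hr0 k).le (hp0 k x)) (hvpos k).le)
    exact ⟨j, Finset.mem_univ j, div_pos (mul_pos (hr0 j) hj) (hvpos j)⟩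
  set D : Fin n → ℝ := fun i => ∑ j, r j * ((∑ x, ω x * (p i x * p j x)) / v j) with hD_def
  have hD : ∀ i, D i = ∑ x, ω x * p i x * f x := by
    intro i
    calc D i = ∑ j, ∑ x, r j * (ω x * (p i x * p j x) / v j) := by
          refine Finset.sum_congr rfl fun j _ => ?_
          rw [Finset.sum_div, Finset.mul_sum]
      _ = ∑ x, ∑ j, r j * (ω x * (p i x * p j x) / v j) := Finset.sum_comm
      _ = ∑ x, ω x * p i x * f x := by
          refine Finset.sum_congr rfl fun x _ => ?_
          rw [hf_def, Finset.mul_sum]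
          exact Finset.sum_congr rfl fun j _ => by ring
  have hDpos : ∀ i, 0 < D i := by
    intro i
    rw [hD i]
    have h1 : ∑ x : X, (0:ℝ) < ∑ x, ω x * p i x := by rw [← hv i]; simpa using hvpos i
    obtain ⟨x, -, hx⟩ := Finset.exists_lt_of_sum_lt h1
    apply Finset.sum_pos'
      (fun y _ => mul_nonneg (mul_nonneg (hω0 y) (hp0 i y)) (hfpos y).le)
    exact ⟨x, Finset.mem_univ x, mul_pos hx (hfpos x)⟩
  set E : Fin n → ℝ := fun i => ∑ x, ω x * p i x / f x with hE_def
  have hkey : ∀ i, v i * v i ≤ D i * E i := by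
    intro i
    have hcs := Finset.sum_sq_le_sum_mul_sum_of_sq_eq_mul Finset.univ
      (r := fun x => ω x * p i x)
      (f := fun x => ω x * p i x * f x) (g := fun x => ω x * p i x / f x)
      (fun x _ => mul_nonneg (mul_nonneg (hω0 x) (hp0 i x)) (hfpos x).le)
      (fun x _ => div_nonneg (mul_nonneg (hω0 x) (hp0 i x)) (hfpos x).le)
      (fun x _ => by
        have hfx := (hfpos x).ne'
        field_simp)
    calc v i * v i = (∑ x, ω x * p i x) ^ 2 := by rw [hv i]; ring
      _ ≤ (∑ x, ω x * p i x * f x) * ∑ x, ω x * p i x / f x := hcs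
      _ = D i * E i := by rw [hD i, hE_def]
  have step : ∀ i, r i * v i / D i ≤ r i * (E i / v i) := by
    intro i
    rw [mul_div_assoc]
    refine mul_le_mul_of_nonneg_left ?_ (hr0 i).le
    rw [div_le_div_iff₀ (hDpos i) (hvpos i)]
    calc v i * v i ≤ D i * E i := hkey i
      _ = E i * D i := mul_comm _ _
  calc ∑ i, r i * v i / D i ≤ ∑ i, r i * (E i / v i) :=
        Finset.sum_le_sum fun i _ => step i
    _ = ∑ i, ∑ x, (ω x / f x) * (r i * p i x / v i) := by
        refine Finset.sum_congr rfl fun i _ => ?_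
        rw [hE_def, Finset.sum_div, Finset.mul_sum]
        refine Finset.sum_congr rfl fun x _ => ?_
        field_simp
    _ = ∑ x, (ω x / f x) * f x := by
        rw [Finset.sum_comm]
        refine Finset.sum_congr rfl fun x _ => ?_
        rw [hf_def, Finset.mul_sum]
    _ = ∑ x, ω x := Finset.sum_congr rfl fun x _ => by
        rw [div_mul_cancel₀ _ (hfpos x).ne']
    _ = 1 := hωsum
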